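/- arXiv:2401.09609 — 2 statements merged into one kernel-verified Lean document; each statement's English description precedes it below -/
import Mathlib

section
/- Let D ⊆ ℝⁿ be a nonempty (possibly infinite) set of nonzero vectors. Then pspan(D) = span(D) if and only if for every d ∈ D, the vector −d lies in pspan(D \ {d}). -/
open scoped RealInnerProductSpace

noncomputable section

/-- The positive span of a set `D`: all finite nonnegative linear combinations
of elements of `D`. -/
def pspan {E : Type*} [AddCommGroup E] [Module ℝ E] (D : Set E) : Set E :=
  {x | ∃ (k : ℕ) (d : Fin k → E) (c : Fin k → ℝ),
    (∀ i, d i ∈ D) ∧ (∀ i, 0 ≤ c i) ∧ x = ∑ i, c i • d i}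

/-- The cosine measure of `D` relative to a subspace `L`:
`min` over unit vectors `u ∈ L` of `sup_{d ∈ D} ⟪u, d⟫ / ‖d‖`. -/
noncomputable def cmRel {E : Type*} [NormedAddCommGroup E] [InnerProductSpace ℝ E]
    (L : Submodule ℝ E) (D : Set E) : ℝ :=
  sInf ((fun u => sSup ((fun d => ⟪u, d⟫ / ‖d‖) '' D)) '' {u : E | u ∈ L ∧ ‖u‖ = 1})

/-- The cosine vector set of `D` relative to a subspace `L`: the set of unit
vectors `u ∈ L` attaining the minimum defining `cmRel L D`. -/
noncomputable def cVRel {E : Type*} [NormedAddCommGroup E] [InnerProductSpace ℝ E]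
    (L : Submodule ℝ E) (D : Set E) : Set E :=
  {u : E | u ∈ L ∧ ‖u‖ = 1 ∧ sSup ((fun d => ⟪u, d⟫ / ‖d‖) '' D) = cmRel L D}

section Aux

variable {E : Type*} [AddCommGroup E] [Module ℝ E] {D : Set E} {x y : E}

lemma pspan_zero : (0:E) ∈ pspan D := ⟨0, ![], ![], by simp, by simp, by simp⟩

lemma pspan_mem_smul {c : ℝ} (hc : 0 ≤ c) {d : E} (hd : d ∈ D) : c • d ∈ pspan D :=
  ⟨1, fun _ => d, fun _ => c, fun _ => hd, fun _ => hc, by simp⟩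

lemma pspan_add (hx : x ∈ pspan D) (hy : y ∈ pspan D) : x + y ∈ pspan D := by
  obtain ⟨k, d, c, hd, hc, rfl⟩ := hx
  obtain ⟨l, e, b, he, hb, rfl⟩ := hy
  refine ⟨k + l, Fin.append d e, Fin.append c b, ?_, ?_, ?_⟩
  · intro i
    refine Fin.addCases (fun j => ?_) (fun j => ?_) i <;>
      simp [Fin.append_left, Fin.append_right, hd, he]
  · intro i
    refine Fin.addCases (fun j => ?_) (fun j => ?_) i <;>
      simp [Fin.append_left, Fin.append_right, hc, hb]
  · rw [Fin.sum_univ_add]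
    simp [Fin.append_left, Fin.append_right]

lemma pspan_sum {ι : Type*} (s : Finset ι) (f : ι → E)
    (hf : ∀ i ∈ s, f i ∈ pspan D) : ∑ i ∈ s, f i ∈ pspan D := by
  classical
  induction s using Finset.induction with
  | empty => simpa using pspan_zero
  | insert a s hi ih =>
    rw [Finset.sum_insert hi]
    exact pspan_add (hf _ (Finset.mem_insert_self _ _))
      (ih fun i hmem => hf i (Finset.mem_insert_of_mem hmem))

lemma pspan_smul {t : ℝ} (ht : 0 ≤ t) (hx : x ∈ pspan D) : t • x ∈ pspan D := by
  obtain ⟨k, d, c, hd, hc, rfl⟩ := hx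
  exact ⟨k, d, fun i => t * c i, hd, fun i => mul_nonneg ht (hc i),
    by simp [Finset.smul_sum, mul_smul]⟩

lemma pspan_mono {D' : Set E} (h : D ⊆ D') : pspan D ⊆ pspan D' := by
  rintro x ⟨k, d, c, hd, hc, rfl⟩
  exact ⟨k, d, c, fun i => h (hd i), hc, rfl⟩

lemma pspan_subset_span : pspan D ⊆ (Submodule.span ℝ D : Set E) := by
  rintro x ⟨k, d, c, hd, hc, rfl⟩
  exact Submodule.sum_mem _ fun i _ =>
    Submodule.smul_mem _ _ (Submodule.subset_span (hd i))

theorem stmt3' (D : Set E) (h0 : (0 : E) ∉ D) :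
    pspan D = (Submodule.span ℝ D : Set E) ↔
      ∀ d ∈ D, -d ∈ pspan (D \ {d}) := by
  classical
  constructor
  · intro h d hd
    have hmem : -d ∈ pspan D := by
      rw [h]
      exact neg_mem (Submodule.subset_span hd)
    obtain ⟨k, dd, c, hdd, hc, heq⟩ := hmem
    set s : Finset (Fin k) := Finset.univ.filter (fun i => dd i ≠ d) with hs
    set a : ℝ := ∑ i ∈ Finset.univ.filter (fun i => dd i = d), c i with ha
    have ha0 : 0 ≤ a := Finset.sum_nonneg fun i _ => hc i
    have hsplit : -d = a • d + ∑ i ∈ s, c i • dd i := by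
      rw [heq, ← Finset.sum_filter_add_sum_filter_not Finset.univ (fun i => dd i = d)]
      congr 1
      · rw [ha, Finset.sum_smul]
        exact Finset.sum_congr rfl fun i hi => by
          rw [(Finset.mem_filter.mp hi).2]
    have hr : (∑ i ∈ s, c i • dd i) ∈ pspan (D \ {d}) := by
      refine pspan_sum s _ fun i hi => pspan_mem_smul (hc i) ?_
      exact ⟨hdd i, (Finset.mem_filter.mp hi).2⟩
    have key : -d = (1 + a)⁻¹ • ∑ i ∈ s, c i • dd i := by
      have h1 : (0:ℝ) < 1 + a := by linarith
      have : (1 + a) • (-d) = ∑ i ∈ s, c i • dd i := by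
        rw [add_smul, one_smul, smul_neg, hsplit]; abel
      rw [← this, smul_smul, inv_mul_cancel₀ h1.ne', one_smul]
    rw [key]
    exact pspan_smul (inv_nonneg.mpr (by linarith)) hr
  · intro h
    apply Set.Subset.antisymm pspan_subset_span
    have hneg : ∀ x ∈ pspan D, -x ∈ pspan D := by
      rintro x ⟨k, d, c, hd, hc, rfl⟩
      rw [← Finset.sum_neg_distrib]
      refine pspan_sum _ _ fun i _ => ?_
      rw [← smul_neg]
      exact pspan_smul (hc i) (pspan_mono Set.diff_subset (h _ (hd i)))
    intro x hx
    induction hx using Submodule.span_induction with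
    | mem d hd => simpa using pspan_mem_smul zero_le_one hd
    | zero => exact pspan_zero
    | add x y _ _ hx hy => exact pspan_add hx hy
    | smul t x _ hx =>
      rcases le_or_gt 0 t with ht | ht
      · exact pspan_smul ht hx
      · have : t • x = (-t) • (-x) := by simp
        rw [this]
        exact pspan_smul (by linarith) (hneg x hx)

end Aux

theorem stmt3 {n : ℕ} (D : Set (EuclideanSpace ℝ (Fin n))) (hne : D.Nonempty)
    (h0 : (0 : EuclideanSpace ℝ (Fin n)) ∉ D) :
    pspan D = (Submodule.span ℝ D : Set (EuclideanSpace ℝ (Fin n))) ↔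
      ∀ d ∈ D, -d ∈ pspan (D \ {d}) :=
  stmt3' D h0
end
end

section
/- Let D ⊆ ℝⁿ be a nonempty (possibly infinite) set of nonzero vectors contained in a linear subspace L ⊆ ℝⁿ. Then pspan(D) = L if and only if for every nonzero vector v ∈ L there exists d ∈ D with ⟨v, d⟩ > 0. -/
open scoped RealInnerProductSpace

noncomputable section

section PspanBasics

variable {E : Type*} [AddCommGroup E] [Module ℝ E] {D : Set E}

lemma subset_pspan : D ⊆ pspan D := by
  intro d hd
  exact ⟨1, fun _ => d, fun _ => 1, fun _ => hd, fun _ => zero_le_one, by simp⟩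

lemma zero_mem_pspan : (0 : E) ∈ pspan D :=
  ⟨0, ![], ![], fun i => i.elim0, fun i => i.elim0, by simp⟩

lemma pspan_add_mem {x y : E} (hx : x ∈ pspan D) (hy : y ∈ pspan D) :
    x + y ∈ pspan D := by
  obtain ⟨k, d, c, hd, hc, rfl⟩ := hx
  obtain ⟨k', d', c', hd', hc', rfl⟩ := hy
  refine ⟨k + k', Fin.append d d', Fin.append c c', ?_, ?_, ?_⟩
  · intro i
    refine Fin.addCases (fun j => ?_) (fun j => ?_) i
    · simpa [Fin.append_left] using hd j
    · simpa [Fin.append_right] using hd' j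
  · intro i
    refine Fin.addCases (fun j => ?_) (fun j => ?_) i
    · simpa [Fin.append_left] using hc j
    · simpa [Fin.append_right] using hc' j
  · rw [Fin.sum_univ_add]
    simp [Fin.append_left, Fin.append_right]

lemma pspan_smul_mem {t : ℝ} (ht : 0 ≤ t) {x : E} (hx : x ∈ pspan D) :
    t • x ∈ pspan D := by
  obtain ⟨k, d, c, hd, hc, rfl⟩ := hx
  exact ⟨k, d, fun i => t * c i, hd, fun i => mul_nonneg ht (hc i),
    by rw [Finset.smul_sum]; simp [smul_smul]⟩

lemma pspan_sum_mem {ι : Type*} (s : Finset ι) {f : ι → E}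
    (hf : ∀ i ∈ s, f i ∈ pspan D) : ∑ i ∈ s, f i ∈ pspan D :=
  Finset.sum_induction f (· ∈ pspan D) (fun _ _ ha hb => pspan_add_mem ha hb)
    zero_mem_pspan hf

lemma pspan_subset_submodule {L : Submodule ℝ E} (hDL : D ⊆ (L : Set E)) :
    pspan D ⊆ (L : Set E) := by
  rintro x ⟨k, d, c, hd, hc, rfl⟩
  exact Submodule.sum_mem L fun i _ => Submodule.smul_mem L _ (hDL (hd i))

lemma pspan_convex : Convex ℝ (pspan D) := by
  intro x hx y hy a b ha hb _
  exact pspan_add_mem (pspan_smul_mem ha hx) (pspan_smul_mem hb hy)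

end PspanBasics

theorem stmt7 {n : ℕ} (D : Set (EuclideanSpace ℝ (Fin n))) (hne : D.Nonempty)
    (h0 : (0 : EuclideanSpace ℝ (Fin n)) ∉ D)
    (L : Submodule ℝ (EuclideanSpace ℝ (Fin n)))
    (hDL : D ⊆ (L : Set (EuclideanSpace ℝ (Fin n)))) :
    pspan D = (L : Set (EuclideanSpace ℝ (Fin n))) ↔
      ∀ v ∈ L, v ≠ 0 → ∃ d ∈ D, 0 < ⟪v, d⟫ := by
  classical
  constructor
  · -- forward direction
    intro hsp v hv hvne
    by_contra hcon
    push_neg at hcon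
    have hvmem : v ∈ pspan D := by rw [hsp]; exact hv
    obtain ⟨k, d, c, hd, hc, hsum⟩ := hvmem
    have hpos : 0 < ⟪v, v⟫ := by
      rw [real_inner_self_eq_norm_mul_norm]
      have : 0 < ‖v‖ := norm_pos_iff.2 hvne
      positivity
    have : ⟪v, v⟫ ≤ 0 := by
      nth_rewrite 2 [hsum]
      rw [inner_sum]
      refine Finset.sum_nonpos fun i _ => ?_
      rw [real_inner_smul_right]
      exact mul_nonpos_iff.2 (Or.inl ⟨hc i, hcon (d i) (hd i)⟩)
    linarith
  · -- backward direction
    intro hcond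
    apply Set.Subset.antisymm (pspan_subset_submodule hDL)
    -- Step 1: L ⊆ closure (pspan D)
    have hcl : ∀ v ∈ L, v ∈ closure (pspan D) := by
      intro v hv
      by_contra hvc
      obtain ⟨f, u, hfa, hfv⟩ :=
        geometric_hahn_banach_closed_point (pspan_convex.closure) isClosed_closure hvc
      have hu0 : 0 < u := by
        have := hfa 0 (subset_closure zero_mem_pspan)
        simpa using this
      -- f is nonpositive on D
      have hfD : ∀ d ∈ D, f d ≤ 0 := by
        intro d hd
        by_contra hfd
        push_neg at hfd
        have ht : (0:ℝ) ≤ (u + 1) / f d := div_nonneg (by linarith) hfd.le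
        have hmem : ((u + 1) / f d) • d ∈ pspan D :=
          pspan_smul_mem ht (subset_pspan hd)
        have := hfa _ (subset_closure hmem)
        rw [map_smul, smul_eq_mul, div_mul_cancel₀ _ (ne_of_gt hfd)] at this
        linarith
      -- Riesz representation
      set w : EuclideanSpace ℝ (Fin n) :=
        (InnerProductSpace.toDual ℝ (EuclideanSpace ℝ (Fin n))).symm f with hw
      have hwf : ∀ x : EuclideanSpace ℝ (Fin n), ⟪w, x⟫ = f x := fun x =>
        InnerProductSpace.toDual_symm_apply
      -- project onto L
      set w' : EuclideanSpace ℝ (Fin n) := (Submodule.orthogonalProjection L w : EuclideanSpace ℝ (Fin n)) with hw'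
      have hw'L : w' ∈ L := (Submodule.orthogonalProjection L w).2
      have hw'inner : ∀ x ∈ L, ⟪w', x⟫ = f x := by
        intro x hx
        have h1 : ⟪w - w', x⟫ = 0 := Submodule.starProjection_inner_eq_zero w x hx
        rw [inner_sub_left] at h1
        rw [← hwf x]
        linarith
      have hw'v : 0 < ⟪w', v⟫ := by rw [hw'inner v hv]; linarith
      have hw'ne : w' ≠ 0 := by
        intro h
        rw [h] at hw'v
        simp at hw'v
      obtain ⟨d, hd, hdpos⟩ := hcond w' hw'L hw'ne
      have := hw'inner d (hDL hd)
      have := hfD d hd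
      linarith
    -- Step 2: span of pspan D is L
    have hsubL : pspan D ⊆ (L : Set (EuclideanSpace ℝ (Fin n))) := pspan_subset_submodule hDL
    have hspan : Submodule.span ℝ (pspan D) = L := by
      apply le_antisymm
      · rw [Submodule.span_le]; exact hsubL
      · intro v hv
        have hcls : IsClosed ((Submodule.span ℝ (pspan D) :
            Submodule ℝ (EuclideanSpace ℝ (Fin n))) : Set (EuclideanSpace ℝ (Fin n))) :=
          Submodule.closed_of_finiteDimensional _
        exact closure_minimal (fun x hx => Submodule.subset_span hx) hcls (hcl v hv)
    -- Step 3: extract a finite basis of L from pspan D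
    obtain ⟨b, hbsub, hbspan, hbli⟩ := exists_linearIndependent ℝ (pspan D)
    rw [hspan] at hbspan
    have hbfin : b.Finite := hbli.setFinite
    haveI : Fintype b := hbfin.fintype
    have hbL : ∀ x : b, (x : EuclideanSpace ℝ (Fin n)) ∈ L := fun x => hsubL (hbsub x.2)
    let wfam : b → L := fun x => ⟨x, hbL x⟩
    have hliw : LinearIndependent ℝ wfam := by
      apply LinearIndependent.of_comp L.subtype
      exact hbli
    have hspw : ⊤ ≤ Submodule.span ℝ (Set.range wfam) := by
      intro x _
      have hmap : Submodule.map L.subtype (Submodule.span ℝ (Set.range wfam)) =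
          Submodule.span ℝ b := by
        rw [Submodule.map_span]
        congr 1
        ext y
        constructor
        · rintro ⟨z, ⟨i, rfl⟩, rfl⟩; exact i.2
        · intro hy; exact ⟨wfam ⟨y, hy⟩, ⟨⟨y, hy⟩, rfl⟩, rfl⟩
      have hx : (x : EuclideanSpace ℝ (Fin n)) ∈ Submodule.span ℝ b := by rw [hbspan]; exact x.2
      rw [← hmap] at hx
      obtain ⟨y, hy, hyx⟩ := hx
      have : y = x := Subtype.ext hyx
      rwa [← this]
    let B : Module.Basis b ℝ L := Module.Basis.mk hliw hspw
    have hBval : ∀ i : b, (B i : EuclideanSpace ℝ (Fin n)) = (i : EuclideanSpace ℝ (Fin n)) := fun i => by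
      rw [Module.Basis.mk_apply]
    have hBmem : ∀ i : b, (B i : EuclideanSpace ℝ (Fin n)) ∈ pspan D := fun i => by
      rw [hBval]; exact hbsub i.2
    -- Step 4: find x in pspan D with all coordinates negative
    let F : L →ₗ[ℝ] (b → ℝ) := B.equivFun.toLinearMap
    have hFcont : Continuous F := F.continuous_of_finiteDimensional
    have hFB : ∀ i j : b, F (B i) j = if i = j then 1 else 0 := by
      intro i j
      simp [F, Module.Basis.equivFun_self]
    let p : L := ∑ i, B i
    have hFp : ∀ j, F p j = 1 := by
      intro j
      simp only [p, map_sum]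
      rw [Finset.sum_apply]
      rw [Finset.sum_eq_single j]
      · simp [hFB]
      · intro i _ hij; simp [hFB, hij]
      · intro h; exact absurd (Finset.mem_univ j) h
    have hUopen : IsOpen {c : b → ℝ | ∀ i, c i < 0} := by
      have : {c : b → ℝ | ∀ i, c i < 0} = ⋂ i, (fun c : b → ℝ => c i) ⁻¹' Set.Iio 0 := by
        ext c; simp
      rw [this]
      exact isOpen_iInter_of_finite fun i => (continuous_apply i).isOpen_preimage _ isOpen_Iio
    have hU : IsOpen (F ⁻¹' {c : b → ℝ | ∀ i, c i < 0}) := hUopen.preimage hFcont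
    obtain ⟨V, hVopen, hVpre⟩ := isOpen_induced_iff.1 hU
    have hnegp : (-p : L) ∈ F ⁻¹' {c : b → ℝ | ∀ i, c i < 0} := by
      intro i
      rw [map_neg]
      simp only [Pi.neg_apply]
      rw [hFp]
      norm_num
    have hnegpV : ((-p : L) : EuclideanSpace ℝ (Fin n)) ∈ V := by
      rw [← hVpre] at hnegp
      exact hnegp
    have hnegpcl : ((-p : L) : EuclideanSpace ℝ (Fin n)) ∈ closure (pspan D) := hcl _ (-p : L).2
    obtain ⟨x, hxV, hxP⟩ := (_root_.mem_closure_iff.1 hnegpcl) V hVopen hnegpV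
    have hxL : x ∈ L := hsubL hxP
    have hxU : (⟨x, hxL⟩ : L) ∈ F ⁻¹' {c : b → ℝ | ∀ i, c i < 0} := by
      rw [← hVpre]
      exact hxV
    have hxneg : ∀ i, F ⟨x, hxL⟩ i < 0 := hxU
    -- Step 5: conclude
    intro v hv
    set vL : L := ⟨v, hv⟩ with hvL
    set a : b → ℝ := F ⟨x, hxL⟩ with ha
    set vi : b → ℝ := F vL with hvi
    set t : ℝ := ∑ i, max (vi i / a i) 0 with hT
    have ht0 : 0 ≤ t := Finset.sum_nonneg fun i _ => le_max_right _ _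
    have hti : ∀ j, vi j / a j ≤ t := by
      intro j
      calc vi j / a j ≤ max (vi j / a j) 0 := le_max_left _ _
        _ ≤ t := Finset.single_le_sum (f := fun i => max (vi i / a i) 0)
            (fun i _ => le_max_right _ _) (Finset.mem_univ j)
    have hcnn : ∀ j, 0 ≤ vi j - t * a j := by
      intro j
      have := (div_le_iff_of_neg (hxneg j)).1 (hti j)
      linarith
    have hkey : vL = t • (⟨x, hxL⟩ : L) + ∑ i, (vi i - t * a i) • B i := by
      apply B.equivFun.injective
      funext j
      rw [map_add, map_smul, map_sum]
      simp only [Pi.add_apply, Pi.smul_apply, smul_eq_mul]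
      rw [Finset.sum_apply]
      have hsum : ∑ i, (B.equivFun ((vi i - t * a i) • B i)) j = vi j - t * a j := by
        rw [Finset.sum_eq_single j]
        · rw [map_smul]
          simp only [Pi.smul_apply, smul_eq_mul]
          have : (B.equivFun (B j)) j = 1 := by
            have := hFB j j
            simpa [F] using this
          rw [this, mul_one]
        · intro i _ hij
          rw [map_smul]
          simp only [Pi.smul_apply, smul_eq_mul]
          have : (B.equivFun (B i)) j = 0 := by
            have := hFB i j
            simpa [F, hij] using this
          rw [this, mul_zero]
        · intro h; exact absurd (Finset.mem_univ j) h
      have hFv : (B.equivFun vL) j = vi j := rfl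
      have hFx : (B.equivFun (⟨x, hxL⟩ : L)) j = a j := rfl
      rw [hFv, hFx, hsum]
      ring
    have hkeyE : v = t • x + ∑ i, (vi i - t * a i) • (B i : EuclideanSpace ℝ (Fin n)) := by
      have := congrArg (Submodule.subtype L) hkey
      simpa using this
    rw [hkeyE]
    refine pspan_add_mem (pspan_smul_mem ht0 hxP) ?_
    exact pspan_sum_mem _ fun i _ => pspan_smul_mem (hcnn i) (hBmem i)
end
end
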